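/- Let S be a nonzero Lie algebra over a field k of characteristic 0, and let L = S × S be the left Leibniz algebra with product (a,a')(b,b') = ([a,b],[a,b']). Then for every x ∈ L such that the left multiplication operator d_x is nilpotent, the automorphism exp(d_x) of L maps the subalgebra S₀ = S × {0} onto itself; consequently the complement S₁ = {(s,s) : s ∈ S} of K = {0} × S is not of the form exp(d_x)(S₀) for any such x, i.e. the two Levi complements S₀ and S₁ are not conjugate under exponentials of inner derivations. -/

import Mathlib

/-- The product of the split extension `L = S × S` of the left `S`-module `K = S`
(with zero right action) by the Lie algebra `S`: `(a,a')(b,b') = ([a,b],[a,b'])`. -/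
def splitProd {S : Type*} [LieRing S] : S × S → S × S → S × S :=
  fun x y => (⁅x.1, y.1⁆, ⁅x.1, y.2⁆)

/-- The left multiplication operator `d_x : L → L`, `d_x(y) = xy`, of the split
extension `L = S × S`, as a linear endomorphism. -/
def leftMulOp (k : Type*) {S : Type*} [Field k] [LieRing S] [LieAlgebra k S]
    (x : S × S) : Module.End k (S × S) where
  toFun y := splitProd x y
  map_add' y z := by simp [splitProd, Prod.ext_iff]
  map_smul' c y := by simp [splitProd, Prod.ext_iff]

open scoped Classical

/-- The exponential of a nilpotent endomorphism `f` (in characteristic `0`):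
`exp f = Σ_{i < n} fⁱ / i!` where `fⁿ = 0`. Defined to be `1` if `f` is not nilpotent. -/
noncomputable def expNil {k M : Type*} [Field k] [AddCommGroup M] [Module k M]
    (f : Module.End k M) : Module.End k M :=
  if h : IsNilpotent f then ∑ i ∈ Finset.range h.choose, ((i.factorial : k)⁻¹) • f ^ i else 1

/-- auxiliary: the adjoint operator as a linear endomorphism -/
def adOp (k : Type*) {S : Type*} [Field k] [LieRing S] [LieAlgebra k S]
    (a : S) : Module.End k S where
  toFun b := ⁅a, b⁆
  map_add' y z := by simp
  map_smul' c y := by simp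

lemma leftMulOp_pow_apply {k S : Type*} [Field k] [LieRing S] [LieAlgebra k S]
    (x : S × S) (i : ℕ) (y : S × S) :
    ((leftMulOp k x) ^ i) y = (((adOp k x.1) ^ i) y.1, ((adOp k x.1) ^ i) y.2) := by
  induction i generalizing y with
  | zero => simp
  | succ n ih =>
    simp only [pow_succ, Module.End.mul_apply, ih]
    rfl

/-- For every `x` in the split extension `L = S × S` with `d_x` nilpotent, the
automorphism `exp(d_x)` maps `S₀ = S × {0}` onto itself; hence the complement
`S₁ = {(s,s)}` of `K = {0} × S` is not conjugate to `S₀` under any such `exp(d_x)`. -/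
theorem complements_not_conjugate {k S : Type*} [Field k] [CharZero k]
    [LieRing S] [LieAlgebra k S] [Nontrivial S] :
    ∀ x : S × S, IsNilpotent (leftMulOp k x) →
      Submodule.map (leftMulOp k x |> expNil)
          ((⊤ : Submodule k S).prod (⊥ : Submodule k S)) =
        (⊤ : Submodule k S).prod (⊥ : Submodule k S) ∧
      Submodule.map (leftMulOp k x |> expNil)
          ((⊤ : Submodule k S).prod (⊥ : Submodule k S)) ≠
        LinearMap.range ((LinearMap.id : S →ₗ[k] S).prod LinearMap.id) := by
  intro x h
  set n := h.choose with hn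
  have hfn : (leftMulOp k x) ^ n = 0 := h.choose_spec
  set g : Module.End k S := adOp k x.1 with hg
  -- g is nilpotent
  have hgn : g ^ n = 0 := by
    ext b
    have := congrArg Prod.fst (congrFun (congrArg DFunLike.coe hfn) (b, 0))
    simpa [leftMulOp_pow_apply] using this
  set E : Module.End k S := ∑ i ∈ Finset.range n, ((i.factorial : k)⁻¹) • g ^ i with hE
  have hexp : ∀ y : S × S, expNil (leftMulOp k x) y = (E y.1, E y.2) := by
    intro y
    rw [expNil, dif_pos h]
    simp [E, g, ← hn, LinearMap.sum_apply, leftMulOp_pow_apply, Prod.ext_iff,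
      Prod.fst_sum, Prod.snd_sum, Prod.smul_fst, Prod.smul_snd]
  -- n ≥ 1
  have hn1 : 0 < n := by
    rcases Nat.eq_zero_or_pos n with h0 | h0
    · exfalso
      rw [h0, pow_zero] at hfn
      obtain ⟨s, hs⟩ := exists_ne (0 : S)
      have := congrFun (congrArg DFunLike.coe hfn) (s, 0)
      simp [Prod.ext_iff] at this
      exact hs this
    · exact h0
  -- E = 1 + N with N nilpotent
  have hEsplit : E = 1 + ∑ i ∈ Finset.Ico 1 n, ((i.factorial : k)⁻¹) • g ^ i := by
    rw [hE, Finset.range_eq_Ico, Finset.sum_eq_sum_Ico_succ_bot hn1]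
    simp
  set N : Module.End k S := ∑ i ∈ Finset.Ico 1 n, ((i.factorial : k)⁻¹) • g ^ i with hN
  set q : Module.End k S := ∑ i ∈ Finset.Ico 1 n, ((i.factorial : k)⁻¹) • g ^ (i - 1) with hq
  have hNgq : N = g * q := by
    rw [hq, Finset.mul_sum, hN]
    refine Finset.sum_congr rfl fun i hi => ?_
    rw [Finset.mem_Ico] at hi
    rw [mul_smul_comm, ← pow_succ']
    congr 2
    omega
  have hcomm : Commute g q := by
    apply Commute.sum_right
    intro i _
    exact (Commute.pow_right (Commute.refl g) _).smul_right _
  have hNnil : IsNilpotent N := by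
    refine ⟨n, ?_⟩
    rw [hNgq, hcomm.mul_pow, hgn, zero_mul]
  have hEunit : IsUnit E := by
    rw [hEsplit]
    exact hNnil.isUnit_one_add
  have hEsurj : Function.Surjective E := ((Module.End.isUnit_iff E).mp hEunit).surjective
  have key : Submodule.map (leftMulOp k x |> expNil)
      ((⊤ : Submodule k S).prod (⊥ : Submodule k S)) =
      (⊤ : Submodule k S).prod (⊥ : Submodule k S) := by
    apply le_antisymm
    · rintro _ ⟨y, hy, rfl⟩
      rw [hexp]
      simp only [SetLike.mem_coe, Submodule.mem_prod, Submodule.mem_top, true_and,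
        Submodule.mem_bot] at *
      rw [hy, map_zero]
    · rintro ⟨a, b⟩ hab
      rw [Submodule.mem_prod] at hab
      simp only [Submodule.mem_bot] at hab
      obtain ⟨c, hc⟩ := hEsurj a
      refine ⟨(c, 0), by simp, ?_⟩
      rw [hexp]
      simp [hc, hab.2]
  refine ⟨key, ?_⟩
  rw [key]
  intro heq
  obtain ⟨s, hs⟩ := exists_ne (0 : S)
  have : (s, s) ∈ (⊤ : Submodule k S).prod (⊥ : Submodule k S) := by
    rw [heq]
    exact ⟨s, rfl⟩
  rw [Submodule.mem_prod] at this
  exact hs (by simpa using this.2)
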